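/- In the space AF (arrow finite quivers on ℕ with the weak topology), the set Fin of finite quivers is dense, has empty interior, is a countable union of closed sets (Fσ), and is not a countable intersection of open sets (not Gδ). The same four statements hold for Fin as a subset of the space LF (locally finite quivers on ℕ with the subspace topology from the strong topology). -/

import Mathlib

-- Mutation of a quiver at a vertex `x`.
open Classical in
noncomputable def mutateFun {X : Type*} (x : X) (Q : X → X → ℤ) : X → X → ℤ :=
  fun v w =>
    if v = x ∨ w = x then - Q v w
    else Q v w + Q v x * max (Q x w) 0 + max (- Q v x) 0 * Q x w

-- Restriction of a quiver to a set of vertices `V`.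
open Classical in
noncomputable def restrictFun {X : Type*} (V : Set X) (Q : X → X → ℤ) : X → X → ℤ :=
  fun a b => if a ∈ V ∧ b ∈ V then Q a b else 0

-- Overfill of a quiver on a set of vertices `V`.
open Classical in
noncomputable def overfillFun {X : Type*} (V : Set X) (Q : X → X → ℤ) : X → X → ℤ :=
  fun a b => if a ∈ V ∨ b ∈ V then Q a b else 0

/-- The set of arrow finite quivers on `X`: skew-symmetric integer matrices. -/
def AF (X : Type*) : Type _ := {Q : X → X → ℤ // ∀ a b, Q a b = - Q b a}

/-- The basic set `U_{Q,V}`. -/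
def Uset {X : Type*} (Q : AF X) (V : Set X) : Set (AF X) :=
  {Q' | restrictFun V Q'.1 = restrictFun V Q.1}

/-- The basic set `W_{Q,V}`. -/
def Wset {X : Type*} (Q : AF X) (V : Set X) : Set (AF X) :=
  {Q' | overfillFun V Q'.1 = overfillFun V Q.1}

def UBasis (X : Type*) : Set (Set (AF X)) :=
  {U | ∃ (Q : AF X) (V : Set X), V.Finite ∧ U = Uset Q V}

def WBasis (X : Type*) : Set (Set (AF X)) :=
  {U | ∃ (Q : AF X) (V : Set X), V.Finite ∧ U = Wset Q V}

/-- The weak topology on `AF X`, generated by the sets `U_{Q,V}` with `V` finite. -/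
def weakTop (X : Type*) : TopologicalSpace (AF X) :=
  TopologicalSpace.generateFrom (UBasis X)

/-- The strong topology on `AF X`, generated by the sets `W_{Q,V}` with `V` finite. -/
def strongTop (X : Type*) : TopologicalSpace (AF X) :=
  TopologicalSpace.generateFrom (WBasis X)

/-- Locally finite quivers. -/
def LFset (X : Type*) : Set (AF X) := {Q | ∀ x : X, {y : X | Q.1 x y ≠ 0}.Finite}

/-- Finite quivers: those with finite support. -/
def FinSet (X : Type*) : Set (AF X) := {Q | {x : X | ∃ y, Q.1 x y ≠ 0}.Finite}

/-- The space `LF`: locally finite quivers on `ℕ` as a subtype of `AF ℕ`. -/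
abbrev LFsub := {Q : AF ℕ // Q ∈ LFset ℕ}

/-- The topology on `LF`: subspace topology inherited from the strong topology. -/
def LFtop : TopologicalSpace LFsub :=
  TopologicalSpace.induced (Subtype.val : LFsub → AF ℕ) (strongTop ℕ)

open Set TopologicalSpace

noncomputable section FCaux

/-! ### Basic constructions -/

def FCzero : AF ℕ := ⟨fun _ _ => 0, fun _ _ => by ring⟩

instance : Nonempty (AF ℕ) := ⟨FCzero⟩

lemma FCmem_Uset {Q Q' : AF ℕ} {V : Set ℕ} :
    Q' ∈ Uset Q V ↔ ∀ a ∈ V, ∀ b ∈ V, Q'.1 a b = Q.1 a b := by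
  constructor
  · intro h a ha b hb
    have := congrFun (congrFun h a) b
    simpa [restrictFun, ha, hb] using this
  · intro h
    funext a b
    simp only [restrictFun]
    split_ifs with hab
    · exact h a hab.1 b hab.2
    · rfl

lemma FCmem_Wset {Q Q' : AF ℕ} {V : Set ℕ} :
    Q' ∈ Wset Q V ↔ ∀ a ∈ V, ∀ b, Q'.1 a b = Q.1 a b := by
  constructor
  · intro h a ha b
    have := congrFun (congrFun h a) b
    simpa [overfillFun, ha] using this
  · intro h
    funext a b
    simp only [overfillFun]
    split_ifs with hab
    · rcases hab with ha | hb
      · exact h a ha b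
      · rw [Q'.2 a b, Q.2 a b, h b hb a]
    · rfl

lemma FCUset_mem_basis (Q : AF ℕ) {V : Set ℕ} (hV : V.Finite) :
    Uset Q V ∈ UBasis ℕ := ⟨Q, V, hV, rfl⟩

lemma FCWset_mem_basis (Q : AF ℕ) {V : Set ℕ} (hV : V.Finite) :
    Wset Q V ∈ WBasis ℕ := ⟨Q, V, hV, rfl⟩

lemma FCmem_Uset_self (Q : AF ℕ) (V : Set ℕ) : Q ∈ Uset Q V := rfl

lemma FCmem_Wset_self (Q : AF ℕ) (V : Set ℕ) : Q ∈ Wset Q V := rfl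

/-! ### Bases -/

lemma FCubasis : @IsTopologicalBasis (AF ℕ) (weakTop ℕ) (UBasis ℕ) := by
  letI := weakTop ℕ
  refine ⟨?_, ?_, rfl⟩
  · rintro t₁ ⟨Q₁, V₁, hV₁, rfl⟩ t₂ ⟨Q₂, V₂, hV₂, rfl⟩ x ⟨hx₁, hx₂⟩
    refine ⟨Uset x (V₁ ∪ V₂), FCUset_mem_basis x (hV₁.union hV₂), FCmem_Uset_self x _, ?_⟩
    intro y hy
    rw [FCmem_Uset] at hy
    constructor
    · rw [FCmem_Uset] at hx₁ ⊢
      intro a ha b hb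
      rw [hy a (Or.inl ha) b (Or.inl hb), hx₁ a ha b hb]
    · rw [FCmem_Uset] at hx₂ ⊢
      intro a ha b hb
      rw [hy a (Or.inr ha) b (Or.inr hb), hx₂ a ha b hb]
  · apply eq_univ_of_forall
    intro x
    exact ⟨Uset x ∅, FCUset_mem_basis x finite_empty, FCmem_Uset_self x _⟩

lemma FCwbasis : @IsTopologicalBasis (AF ℕ) (strongTop ℕ) (WBasis ℕ) := by
  letI := strongTop ℕ
  refine ⟨?_, ?_, rfl⟩
  · rintro t₁ ⟨Q₁, V₁, hV₁, rfl⟩ t₂ ⟨Q₂, V₂, hV₂, rfl⟩ x ⟨hx₁, hx₂⟩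
    refine ⟨Wset x (V₁ ∪ V₂), FCWset_mem_basis x (hV₁.union hV₂), FCmem_Wset_self x _, ?_⟩
    intro y hy
    rw [FCmem_Wset] at hy
    constructor
    · rw [FCmem_Wset] at hx₁ ⊢
      intro a ha b
      rw [hy a (Or.inl ha) b, hx₁ a ha b]
    · rw [FCmem_Wset] at hx₂ ⊢
      intro a ha b
      rw [hy a (Or.inr ha) b, hx₂ a ha b]
  · apply eq_univ_of_forall
    intro x
    exact ⟨Wset x ∅, FCWset_mem_basis x finite_empty, FCmem_Wset_self x _⟩

lemma FClfbasis : @IsTopologicalBasis LFsub LFtop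
    ((Set.preimage (Subtype.val : LFsub → AF ℕ)) '' (WBasis ℕ)) := by
  letI := strongTop ℕ
  exact FCwbasis.induced _

/-! ### Quiver constructions -/

def FCadd (P Q : AF ℕ) : AF ℕ :=
  ⟨fun a b => P.1 a b + Q.1 a b, fun a b => by dsimp only; rw [P.2 a b, Q.2 a b]; ring⟩

def FCrestrict (V : Set ℕ) (Q : AF ℕ) : AF ℕ :=
  ⟨restrictFun V Q.1, fun a b => by
    simp only [restrictFun]
    by_cases ha : a ∈ V <;> by_cases hb : b ∈ V <;> simp [ha, hb, Q.2 a b]⟩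

def FCoverfill (V : Set ℕ) (Q : AF ℕ) : AF ℕ :=
  ⟨overfillFun V Q.1, fun a b => by
    simp only [overfillFun]
    by_cases ha : a ∈ V <;> by_cases hb : b ∈ V <;> simp [ha, hb, Q.2 a b]⟩

def FCtower (N : ℕ) : AF ℕ :=
  ⟨fun a b => if b = a + 1 ∧ N ≤ a then 1 else if a = b + 1 ∧ N ≤ b then -1 else 0,
   fun a b => by dsimp only; split_ifs <;> omega⟩

lemma FCtower_row {N a : ℕ} (h : N ≤ a) : (FCtower N).1 a (a + 1) = 1 := by
  simp [FCtower, h]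

lemma FCtower_vanish {N : ℕ} {V : Set ℕ} (hV : ∀ v ∈ V, v < N) {a b : ℕ}
    (hab : a ∈ V ∨ b ∈ V) : (FCtower N).1 a b = 0 := by
  have h1 : a ∈ V → a < N := hV a
  have h2 : b ∈ V → b < N := hV b
  simp only [FCtower]
  split_ifs with hx hy
  · exfalso; rcases hab with h | h
    · exact absurd (h1 h) (by omega)
    · exact absurd (h2 h) (by omega)
  · exfalso; rcases hab with h | h
    · exact absurd (h1 h) (by omega)
    · exact absurd (h2 h) (by omega)
  · rfl

lemma FCrestrict_idem (V : Set ℕ) (f : ℕ → ℕ → ℤ) :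
    restrictFun V (restrictFun V f) = restrictFun V f := by
  funext a b
  simp only [restrictFun]
  split_ifs with h <;> simp [h]

lemma FCoverfill_idem (V : Set ℕ) (f : ℕ → ℕ → ℤ) :
    overfillFun V (overfillFun V f) = overfillFun V f := by
  funext a b
  simp only [overfillFun]
  split_ifs with h <;> simp [h]

lemma FCrestrict_mem_Uset (V : Set ℕ) (Q : AF ℕ) : FCrestrict V Q ∈ Uset Q V := by
  rw [FCmem_Uset]
  intro a ha b hb
  simp [FCrestrict, restrictFun, ha, hb]

lemma FCoverfill_mem_Wset (V : Set ℕ) (Q : AF ℕ) : FCoverfill V Q ∈ Wset Q V := by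
  rw [FCmem_Wset]
  intro a ha b
  simp [FCoverfill, overfillFun, ha]

lemma FCrestrict_fin {V : Set ℕ} (hV : V.Finite) (Q : AF ℕ) :
    FCrestrict V Q ∈ FinSet ℕ := by
  apply hV.subset
  rintro a ⟨b, hb⟩
  by_contra ha
  exact hb (by simp [FCrestrict, restrictFun, ha])

lemma FCoverfill_fin {V : Set ℕ} (hV : V.Finite) {Q : AF ℕ} (hQ : Q ∈ LFset ℕ) :
    FCoverfill V Q ∈ FinSet ℕ := by
  apply Set.Finite.subset (hV.union (Set.Finite.biUnion hV (fun v _ => hQ v)))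
  rintro a ⟨b, hb⟩
  by_cases ha : a ∈ V
  · exact Or.inl ha
  · right
    simp only [overfillFun, FCoverfill] at hb
    by_cases hbV : b ∈ V
    · refine mem_biUnion hbV ?_
      simp only [mem_setOf_eq]
      intro h0
      apply hb
      split_ifs with h
      · rw [Q.2 a b, h0]; ring
      · rfl
    · exact absurd (by simp [ha, hbV]) hb

lemma FCoverfill_lf {V : Set ℕ} {Q : AF ℕ} (hQ : Q ∈ LFset ℕ) :
    FCoverfill V Q ∈ LFset ℕ := by
  intro x
  apply (hQ x).subset
  intro y hy
  simp only [mem_setOf_eq, FCoverfill, overfillFun] at hy ⊢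
  intro h0
  apply hy
  split_ifs <;> simp [h0]

lemma FCtower_lf (N : ℕ) : FCtower N ∈ LFset ℕ := by
  intro x
  apply (Set.finite_singleton (x + 1) |>.union (Set.finite_singleton (x - 1))).subset
  intro y hy
  simp only [mem_setOf_eq, FCtower] at hy
  split_ifs at hy with h1 h2
  · exact Or.inl (by simp [h1.1])
  · exact Or.inr (by simp; omega)
  · exact absurd rfl hy

lemma FCadd_lf {P Q : AF ℕ} (hP : P ∈ LFset ℕ) (hQ : Q ∈ LFset ℕ) :
    FCadd P Q ∈ LFset ℕ := by
  intro x
  apply ((hP x).union (hQ x)).subset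
  intro y hy
  simp only [mem_setOf_eq, FCadd] at hy
  by_contra h
  rw [mem_union] at h
  push_neg at h
  simp only [mem_setOf_eq, not_not] at h
  exact hy (by rw [h.1, h.2]; ring)

/-- The "infinite tail" modification: agrees with `Q` on `V`-restriction but has
infinite support. -/
lemma FCnotfin_aux {N : ℕ} {V : Set ℕ} (hV : ∀ v ∈ V, v < N) (P : AF ℕ)
    (hP : ∀ a b, (¬ (a ∈ V ∨ b ∈ V)) → P.1 a b = 0) :
    FCadd P (FCtower N) ∉ FinSet ℕ := by
  intro hfin
  have hsub : Set.Ici N ⊆ {x | ∃ y, (FCadd P (FCtower N)).1 x y ≠ 0} := by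
    intro a (ha : N ≤ a)
    refine ⟨a + 1, ?_⟩
    have hav : a ∉ V := fun h => by have := hV a h; omega
    have hbv : a + 1 ∉ V := fun h => by have := hV _ h; omega
    simp only [FCadd, hP a (a + 1) (by tauto), FCtower_row ha]
    norm_num
  exact (Set.Ici_infinite N).mono hsub hfin
/-! ### The Fσ decomposition -/

def FCF (n : ℕ) : Set (AF ℕ) := {Q | ∀ a, n ≤ a → ∀ b, Q.1 a b = 0}

lemma FCF_subset_fin (n : ℕ) : FCF n ⊆ FinSet ℕ := by
  intro Q hQ
  apply (Set.finite_Iio n).subset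
  rintro a ⟨b, hb⟩
  by_contra ha
  exact hb (hQ a (by simpa using ha) b)

lemma FCfin_eq_iUnion : FinSet ℕ = ⋃ n, FCF n := by
  apply Set.Subset.antisymm
  · intro Q hQ
    obtain ⟨N, hN⟩ := hQ.bddAbove
    refine mem_iUnion.2 ⟨N + 1, fun a ha b => ?_⟩
    by_contra hb
    have : a ≤ N := hN ⟨b, hb⟩
    omega
  · exact iUnion_subset FCF_subset_fin

lemma FCF_closed_weak (n : ℕ) : @IsClosed (AF ℕ) (weakTop ℕ) (FCF n) := by
  letI := weakTop ℕ
  rw [← isOpen_compl_iff, FCubasis.isOpen_iff]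
  intro Q hQ
  simp only [FCF, mem_compl_iff, mem_setOf_eq] at hQ
  push_neg at hQ
  obtain ⟨a, ha, b, hb⟩ := hQ
  refine ⟨Uset Q {a, b}, FCUset_mem_basis Q (by simp), FCmem_Uset_self Q _, ?_⟩
  intro Q' hQ'
  rw [FCmem_Uset] at hQ'
  simp only [FCF, mem_compl_iff, mem_setOf_eq]
  push_neg
  exact ⟨a, ha, b, by rw [hQ' a (by simp) b (by simp)]; exact hb⟩

lemma FCF_closed_LF (n : ℕ) :
    @IsClosed LFsub LFtop (Subtype.val ⁻¹' FCF n) := by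
  letI := LFtop
  rw [← isOpen_compl_iff, FClfbasis.isOpen_iff]
  intro Q hQ
  simp only [FCF, mem_compl_iff, mem_preimage, mem_setOf_eq] at hQ
  push_neg at hQ
  obtain ⟨a, ha, b, hb⟩ := hQ
  refine ⟨Subtype.val ⁻¹' Wset Q.1 {a},
    ⟨Wset Q.1 {a}, FCWset_mem_basis Q.1 (Set.finite_singleton a), rfl⟩,
    FCmem_Wset_self Q.1 _, ?_⟩
  intro Q' hQ'
  rw [mem_preimage, FCmem_Wset] at hQ'
  simp only [FCF, mem_compl_iff, mem_preimage, mem_setOf_eq]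
  push_neg
  exact ⟨a, ha, b, by rw [hQ' a rfl b]; exact hb⟩

/-! ### Density -/

lemma FCdense_weak : @Dense (AF ℕ) (weakTop ℕ) (FinSet ℕ) := by
  letI := weakTop ℕ
  rw [FCubasis.dense_iff]
  rintro o ⟨Q, V, hV, rfl⟩ ⟨x, hx⟩
  refine ⟨FCrestrict V x, ?_, FCrestrict_fin hV x⟩
  have h1 : FCrestrict V x ∈ Uset x V := FCrestrict_mem_Uset V x
  show restrictFun V (FCrestrict V x).1 = restrictFun V Q.1
  rw [h1, hx]

lemma FCdense_LF : @Dense LFsub LFtop {Q : LFsub | Q.1 ∈ FinSet ℕ} := by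
  letI := LFtop
  rw [FClfbasis.dense_iff]
  rintro o ⟨w, ⟨Q, V, hV, rfl⟩, rfl⟩ ⟨x, hx⟩
  refine ⟨⟨FCoverfill V x.1, FCoverfill_lf x.2⟩, ?_, FCoverfill_fin hV x.2⟩
  have h1 : FCoverfill V x.1 ∈ Wset x.1 V := FCoverfill_mem_Wset V x.1
  show overfillFun V (FCoverfill V x.1).1 = overfillFun V Q.1
  rw [h1, hx]

/-! ### Empty interior -/

lemma FCbound {V : Set ℕ} (hV : V.Finite) : ∃ N, ∀ v ∈ V, v < N := by
  obtain ⟨N, hN⟩ := hV.bddAbove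
  exact ⟨N + 1, fun v hv => by have := hN hv; omega⟩

lemma FCinterior_weak : @interior (AF ℕ) (weakTop ℕ) (FinSet ℕ) = ∅ := by
  letI := weakTop ℕ
  rw [eq_empty_iff_forall_notMem]
  intro Q hQ
  rw [mem_interior_iff_mem_nhds, FCubasis.mem_nhds_iff] at hQ
  obtain ⟨t, ⟨Q₀, V, hV, rfl⟩, hQt, hts⟩ := hQ
  obtain ⟨N, hN⟩ := FCbound hV
  set y := FCadd (FCrestrict V Q) (FCtower N) with hy
  have hyU : y ∈ Uset Q₀ V := by
    rw [FCmem_Uset] at hQt ⊢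
    intro a ha b hb
    have : y.1 a b = Q.1 a b := by
      simp [hy, FCadd, FCrestrict, restrictFun, ha, hb, FCtower_vanish hN (Or.inl ha)]
    rw [this, hQt a ha b hb]
  exact FCnotfin_aux hN (FCrestrict V Q)
    (fun a b hab => by
      simp only [FCrestrict, restrictFun]
      rw [if_neg (fun h => hab (Or.inl h.1))]) (hts hyU)

lemma FCinterior_LF : @interior LFsub LFtop {Q : LFsub | Q.1 ∈ FinSet ℕ} = ∅ := by
  letI := LFtop
  rw [eq_empty_iff_forall_notMem]
  intro Q hQ
  rw [mem_interior_iff_mem_nhds, FClfbasis.mem_nhds_iff] at hQ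
  obtain ⟨t, ⟨w, ⟨Q₀, V, hV, rfl⟩, rfl⟩, hQt, hts⟩ := hQ
  obtain ⟨N, hN⟩ := FCbound hV
  set y := FCadd (FCoverfill V Q.1) (FCtower N) with hy
  have hylf : y ∈ LFset ℕ := FCadd_lf (FCoverfill_lf Q.2) (FCtower_lf N)
  have hyW : y ∈ Wset Q₀ V := by
    rw [mem_preimage, FCmem_Wset] at hQt
    rw [FCmem_Wset]
    intro a ha b
    have : y.1 a b = Q.1.1 a b := by
      simp [hy, FCadd, FCoverfill, overfillFun, ha, FCtower_vanish hN (Or.inl ha)]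
    rw [this, hQt a ha b]
  exact FCnotfin_aux hN (FCoverfill V Q.1)
    (fun a b hab => by
      simp only [FCoverfill, overfillFun]
      rw [if_neg hab])
    (hts (show (⟨y, hylf⟩ : LFsub) ∈ Subtype.val ⁻¹' Wset Q₀ V from hyW))
/-! ### `AF` with the weak topology is Polish -/

def FCe : AF ℕ → (ℕ × ℕ → ℤ) := fun Q p => Q.1 p.1 p.2

lemma FCe_inducing : weakTop ℕ = TopologicalSpace.induced FCe inferInstance := by
  apply le_antisymm
  · rw [← continuous_iff_le_induced (t₁ := weakTop ℕ)]
    letI := weakTop ℕ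
    apply continuous_pi
    intro p
    rw [continuous_discrete_rng]
    intro m
    rw [FCubasis.isOpen_iff]
    intro Q hQ
    simp only [mem_preimage, mem_singleton_iff] at hQ
    refine ⟨Uset Q {p.1, p.2}, FCUset_mem_basis Q (by simp), FCmem_Uset_self Q _, ?_⟩
    intro Q' hQ'
    rw [FCmem_Uset] at hQ'
    simp only [mem_preimage, mem_singleton_iff, FCe]
    rw [hQ' p.1 (by simp) p.2 (by simp)]
    exact hQ
  · apply le_generateFrom
    rintro s ⟨Q, V, hV, rfl⟩
    have : Uset Q V = FCe ⁻¹' (Set.pi (V ×ˢ V) (fun p => {Q.1 p.1 p.2})) := by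
      ext Q'
      rw [FCmem_Uset]
      simp only [mem_preimage, Set.mem_pi, Set.mem_prod, mem_singleton_iff, FCe]
      constructor
      · rintro h p ⟨h1, h2⟩
        exact h p.1 h1 p.2 h2
      · intro h a ha b hb
        exact h (a, b) ⟨ha, hb⟩
    rw [this]
    exact isOpen_induced (isOpen_set_pi (hV.prod hV) (fun p _ => isOpen_discrete _))

lemma FCe_closedEmbedding :
    @Topology.IsClosedEmbedding (AF ℕ) (ℕ × ℕ → ℤ) (weakTop ℕ) _ FCe := by
  letI := weakTop ℕ
  refine ⟨⟨⟨FCe_inducing⟩, ?_⟩, ?_⟩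
  · intro Q Q' h
    apply Subtype.ext
    funext a b
    exact congrFun h (a, b)
  · have : Set.range FCe = ⋂ (a : ℕ), ⋂ (b : ℕ), {f : ℕ × ℕ → ℤ | f (a, b) = - f (b, a)} := by
      ext f
      simp only [mem_range, mem_iInter, mem_setOf_eq]
      constructor
      · rintro ⟨Q, rfl⟩ a b
        exact Q.2 a b
      · intro h
        exact ⟨⟨fun a b => f (a, b), h⟩, rfl⟩
    rw [this]
    refine isClosed_iInter (fun a => isClosed_iInter (fun b => ?_))
    have hc : Continuous (fun f : ℕ × ℕ → ℤ => (f (a, b), f (b, a))) :=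
      (continuous_apply _).prodMk (continuous_apply _)
    exact (isClosed_discrete {p : ℤ × ℤ | p.1 = - p.2}).preimage hc

lemma FCpolish_weak : @PolishSpace (AF ℕ) (weakTop ℕ) := by
  letI := weakTop ℕ
  exact FCe_closedEmbedding.polishSpace

lemma FCbaire_weak : @BaireSpace (AF ℕ) (weakTop ℕ) := by
  letI := weakTop ℕ
  haveI := FCpolish_weak
  letI := upgradeIsCompletelyMetrizable (AF ℕ)
  infer_instance

/-! ### `LF` is Polish -/

def FCfinsuppTop : TopologicalSpace (ℕ →₀ ℤ) := ⊥

attribute [local instance] FCfinsuppTop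

instance : DiscreteTopology (ℕ →₀ ℤ) := ⟨rfl⟩

def FCr : LFsub → (ℕ → (ℕ →₀ ℤ)) := fun Q a => Finsupp.ofSupportFinite (Q.1.1 a) (Q.2 a)

lemma FCr_apply (Q : LFsub) (a b : ℕ) : FCr Q a b = Q.1.1 a b := by
  rfl

lemma FCr_inducing : LFtop = TopologicalSpace.induced FCr inferInstance := by
  apply le_antisymm
  · rw [← continuous_iff_le_induced (t₁ := LFtop)]
    letI := LFtop
    apply continuous_pi
    intro a
    rw [continuous_discrete_rng]
    intro g
    rw [FClfbasis.isOpen_iff]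
    intro Q hQ
    simp only [mem_preimage, mem_singleton_iff] at hQ
    refine ⟨Subtype.val ⁻¹' Wset Q.1 {a},
      ⟨Wset Q.1 {a}, FCWset_mem_basis Q.1 (Set.finite_singleton a), rfl⟩,
      FCmem_Wset_self Q.1 _, ?_⟩
    intro Q' hQ'
    rw [mem_preimage, FCmem_Wset] at hQ'
    simp only [mem_preimage, mem_singleton_iff]
    rw [← hQ]
    apply Finsupp.ext
    intro b
    rw [FCr_apply, FCr_apply, hQ' a rfl b]
  · show TopologicalSpace.induced FCr inferInstance ≤
      TopologicalSpace.induced (Subtype.val : LFsub → AF ℕ) (strongTop ℕ)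
    rw [show strongTop ℕ = TopologicalSpace.generateFrom (WBasis ℕ) from rfl,
      induced_generateFrom_eq]
    apply le_generateFrom
    rintro s ⟨w, ⟨Q, V, hV, rfl⟩, rfl⟩
    have : Subtype.val ⁻¹' Wset Q V =
        FCr ⁻¹' (Set.pi V (fun a => {g : ℕ →₀ ℤ | ∀ b, g b = Q.1 a b})) := by
      ext Q'
      rw [mem_preimage, FCmem_Wset]
      simp only [mem_preimage, Set.mem_pi, mem_setOf_eq]
      constructor
      · intro h a ha b
        rw [FCr_apply]
        exact h a ha b
      · intro h a ha b
        rw [← FCr_apply]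
        exact h a ha b
    rw [this]
    exact isOpen_induced (isOpen_set_pi hV (fun a _ => isOpen_discrete _))

lemma FCr_closedEmbedding :
    @Topology.IsClosedEmbedding LFsub (ℕ → (ℕ →₀ ℤ)) LFtop _ FCr := by
  letI := LFtop
  refine ⟨⟨⟨FCr_inducing⟩, ?_⟩, ?_⟩
  · intro Q Q' h
    apply Subtype.ext
    apply Subtype.ext
    funext a b
    rw [← FCr_apply, ← FCr_apply, h]
  · have : Set.range FCr = ⋂ (a : ℕ), ⋂ (b : ℕ),
        {f : ℕ → (ℕ →₀ ℤ) | f a b = - f b a} := by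
      ext f
      simp only [mem_range, mem_iInter, mem_setOf_eq]
      constructor
      · rintro ⟨Q, rfl⟩ a b
        rw [FCr_apply, FCr_apply]
        exact Q.1.2 a b
      · intro h
        have hlf : (⟨fun a b => f a b, fun a b => h a b⟩ : AF ℕ) ∈ LFset ℕ := by
          intro a
          apply ((f a).support.finite_toSet).subset
          intro y hy
          rw [Finset.mem_coe, Finsupp.mem_support_iff]
          exact hy
        refine ⟨⟨_, hlf⟩, ?_⟩
        funext a
        apply Finsupp.ext
        intro b
        rw [FCr_apply]
    rw [this]
    refine isClosed_iInter (fun a => isClosed_iInter (fun b => ?_))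
    have hc : Continuous (fun f : ℕ → (ℕ →₀ ℤ) => (f a, f b)) :=
      (continuous_apply _).prodMk (continuous_apply _)
    exact (isClosed_discrete {p : (ℕ →₀ ℤ) × (ℕ →₀ ℤ) | p.1 b = - p.2 a}).preimage hc

lemma FCbaire_LF : @BaireSpace LFsub LFtop := by
  letI := LFtop
  haveI : PolishSpace (ℕ →₀ ℤ) := inferInstance
  haveI : PolishSpace LFsub := FCr_closedEmbedding.polishSpace
  letI := upgradeIsCompletelyMetrizable LFsub
  infer_instance

/-! ### The generic non-Gδ argument -/

lemma FCnot_gdelta {α : Type*} [TopologicalSpace α] [BaireSpace α] [Nonempty α] {s : Set α}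
    (hd : Dense s) (F : ℕ → Set α) (hFc : ∀ n, IsClosed (F n))
    (hFi : ∀ n, interior (F n) = ∅) (hFs : s = ⋃ n, F n) : ¬ IsGδ s := by
  rintro ⟨T, hTo, hTc, hTs⟩
  set S := T ∪ Set.range (fun n => (F n)ᶜ) with hS
  have hdense : Dense (⋂₀ S) := by
    apply dense_sInter_of_isOpen
    · rintro t (ht | ⟨n, rfl⟩)
      · exact hTo t ht
      · exact (hFc n).isOpen_compl
    · exact hTc.union (Set.countable_range _)
    · rintro t (ht | ⟨n, rfl⟩)
      · refine hd.mono ?_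
        rw [hTs]
        exact sInter_subset_of_mem ht
      · rw [← interior_eq_empty_iff_dense_compl]
        exact hFi n
  have hempty : ⋂₀ S = ∅ := by
    rw [hS, sInter_union, sInter_range, ← compl_iUnion, ← hFs, ← hTs, inter_compl_self]
  rw [hempty] at hdense
  exact absurd hdense.nonempty (by simp)
end FCaux

/-- In `AF` (weak topology) the set of finite quivers is dense, has empty interior,
is Fσ, and is not Gδ; likewise in `LF` (subspace of the strong topology). -/
theorem finiteness_complexity :
    (@Dense _ (weakTop ℕ) (FinSet ℕ) ∧
     @interior _ (weakTop ℕ) (FinSet ℕ) = ∅ ∧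
     (∃ F : ℕ → Set (AF ℕ), (∀ n, @IsClosed _ (weakTop ℕ) (F n)) ∧ FinSet ℕ = ⋃ n, F n) ∧
     ¬ @IsGδ _ (weakTop ℕ) (FinSet ℕ)) ∧
    (@Dense _ LFtop {Q : LFsub | Q.1 ∈ FinSet ℕ} ∧
     @interior _ LFtop {Q : LFsub | Q.1 ∈ FinSet ℕ} = ∅ ∧
     (∃ F : ℕ → Set LFsub, (∀ n, @IsClosed _ LFtop (F n)) ∧
       {Q : LFsub | Q.1 ∈ FinSet ℕ} = ⋃ n, F n) ∧
     ¬ @IsGδ _ LFtop {Q : LFsub | Q.1 ∈ FinSet ℕ}) := by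
  constructor
  · refine ⟨FCdense_weak, FCinterior_weak, ⟨FCF, FCF_closed_weak, FCfin_eq_iUnion⟩, ?_⟩
    letI := weakTop ℕ
    haveI := FCbaire_weak
    exact FCnot_gdelta FCdense_weak FCF FCF_closed_weak
      (fun n => Set.eq_empty_of_subset_empty
        (FCinterior_weak ▸ interior_mono (FCF_subset_fin n)))
      FCfin_eq_iUnion
  · have hunion : {Q : LFsub | Q.1 ∈ FinSet ℕ} = ⋃ n, Subtype.val ⁻¹' FCF n := by
      rw [← Set.preimage_iUnion, ← FCfin_eq_iUnion]; rfl
    refine ⟨FCdense_LF, FCinterior_LF,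
      ⟨fun n => Subtype.val ⁻¹' FCF n, FCF_closed_LF, hunion⟩, ?_⟩
    letI := LFtop
    haveI := FCbaire_LF
    haveI : Nonempty LFsub := ⟨⟨FCzero, fun x => by simp [FCzero]⟩⟩
    refine FCnot_gdelta FCdense_LF (fun n => Subtype.val ⁻¹' FCF n) FCF_closed_LF ?_ hunion
    intro n
    apply Set.eq_empty_of_subset_empty
    rw [← FCinterior_LF]
    exact interior_mono (fun x hx => FCF_subset_fin n hx)
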